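/- For every integer n ≥ 4, the cardinality of the image of 𝒩 under the second iterate of the counting operator is |s^[2](𝒩)| = P(n) − 2, where P(n) denotes the number of unrestricted partitions of the integer n. -/

import Mathlib

/-- The counting operator: `countOp n x j` is the number of indices `i` with `x i = j`. -/
def countOp (n : ℕ) (x : Fin n → ℕ) : Fin n → ℕ :=
  fun j => (Finset.univ.filter fun i => x i = (j : ℕ)).card

/-- `𝒩`: the set of `n`-chains that are neither constant nor injective. -/
def NSet (n : ℕ) : Set (Fin n → ℕ) :=
  {x | (∀ i, x i < n) ∧ (¬ ∃ c, ∀ i, x i = c) ∧ ¬ Function.Injective x}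

/-- sum of all fiber counts is `n`. -/
lemma sum_countOp (n : ℕ) (x : Fin n → ℕ) (h : ∀ i, x i < n) :
    ∑ j : Fin n, countOp n x j = n := by
  classical
  have key := Finset.card_eq_sum_card_fiberwise (f := x) (s := Finset.univ)
    (t := Finset.range n) (fun i _ => Finset.mem_range.2 (h i))
  rw [Finset.card_univ, Fintype.card_fin] at key
  have h2 := Fin.sum_univ_eq_sum_range
    (fun m => (Finset.univ.filter fun i => x i = m).card) n
  rw [show (∑ j : Fin n, countOp n x j) =
      ∑ j : Fin n, (Finset.univ.filter fun i => x i = ((j : Fin n) : ℕ)).card from rfl]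
  rw [h2, ← key]

/-- the partition of `n` given by fiber sizes of `x`. -/
def fiberPartition (n : ℕ) (x : Fin n → ℕ) (h : ∀ i, x i < n) : Nat.Partition n where
  parts := (Finset.univ.val.map (countOp n x)).filter (0 < ·)
  parts_pos := fun hi => (Multiset.of_mem_filter hi)
  parts_sum := by
    have h2 : ((Finset.univ.val.map (countOp n x)).filter (0 < ·)).sum
        + ((Finset.univ.val.map (countOp n x)).filter (fun a => ¬ 0 < a)).sum
        = ∑ j : Fin n, countOp n x j := by
      rw [← Multiset.sum_add, Multiset.filter_add_not]
      rfl
    have h3 : ((Finset.univ.val.map (countOp n x)).filter (fun a => ¬ 0 < a)).sum = 0 :=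
      Multiset.sum_eq_zero (fun a ha => by
        simpa using Multiset.of_mem_filter ha)
    rw [h3, add_zero] at h2
    rw [h2, sum_countOp n x h]

lemma fiberPartition_parts (n : ℕ) (x : Fin n → ℕ) (h : ∀ i, x i < n) :
    (fiberPartition n x h).parts = (Finset.univ.val.map (countOp n x)).filter (0 < ·) := rfl

/-- the map from partitions to the value of `s²`. -/
def Fmap (n : ℕ) (p : Nat.Partition n) : Fin n → ℕ :=
  fun j => if (j : ℕ) = 0 then n - Multiset.card p.parts else p.parts.count (j : ℕ)

lemma second_iterate_eq (n : ℕ) (x : Fin n → ℕ) (h : ∀ i, x i < n) :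
    (countOp n)^[2] x = Fmap n (fiberPartition n x h) := by
  classical
  funext j
  show countOp n (countOp n x) j = _
  set y := countOp n x with hy
  unfold Fmap
  rw [fiberPartition_parts]
  by_cases hj : (j : ℕ) = 0
  · rw [if_pos hj]
    have hcard : Multiset.card ((Finset.univ.val.map y).filter (0 < ·))
        = (Finset.univ.filter fun j' : Fin n => 0 < y j').card := by
      rw [Multiset.filter_map, Multiset.card_map]
      rfl
    have hsplit := Finset.card_filter_add_card_filter_not
      (s := (Finset.univ : Finset (Fin n))) (p := fun j' => 0 < y j')
    rw [Finset.card_univ, Fintype.card_fin] at hsplit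
    have heq : (Finset.univ.filter fun j' : Fin n => ¬ 0 < y j')
        = Finset.univ.filter fun j' : Fin n => y j' = 0 := by
      apply Finset.filter_congr; intro j' _; simp [Nat.pos_iff_ne_zero]
    rw [heq] at hsplit
    show (Finset.univ.filter fun j' => y j' = (j : ℕ)).card = _
    rw [hj, hcard]
    omega
  · rw [if_neg hj]
    rw [Multiset.count_filter, if_pos (Nat.pos_of_ne_zero hj), Multiset.count_map]
    show (Finset.univ.filter fun j' => y j' = (j : ℕ)).card = _
    rw [show (Finset.univ.filter fun j' : Fin n => y j' = (j : ℕ))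
        = Finset.univ.filter (fun j' : Fin n => (j : ℕ) = countOp n x j') from by
      apply Finset.filter_congr; intro j' _; simp [eq_comm, hy]]
    rfl

/-- the all-ones partition -/
def pBot (n : ℕ) : Nat.Partition n where
  parts := Multiset.replicate n 1
  parts_pos := fun hi => by simp_all [Multiset.eq_of_mem_replicate hi]
  parts_sum := by simp

lemma fiberPartition_ne_top (n : ℕ) (x : Fin n → ℕ) (h : ∀ i, x i < n)
    (hc : ¬ ∃ c, ∀ i, x i = c) (hn : 0 < n) :
    fiberPartition n x h ≠ Nat.Partition.indiscrete n := by
  intro hEq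
  have hparts : (fiberPartition n x h).parts = {n} := by
    rw [hEq, Nat.Partition.indiscrete_parts hn.ne']
  have hmem : (n : ℕ) ∈ (fiberPartition n x h).parts := by rw [hparts]; simp
  rw [fiberPartition_parts] at hmem
  obtain ⟨j, _, hj⟩ := Multiset.mem_map.1 (Multiset.mem_filter.1 hmem).1
  have hcard : (Finset.univ.filter fun i => x i = (j : ℕ)).card = Fintype.card (Fin n) := by
    rw [Fintype.card_fin]; exact hj
  have huniv := Finset.eq_univ_of_card _ hcard
  refine hc ⟨(j : ℕ), fun i => ?_⟩
  have hi : i ∈ Finset.univ.filter fun i => x i = (j : ℕ) := by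
    rw [huniv]; exact Finset.mem_univ i
  exact (Finset.mem_filter.1 hi).2

lemma fiberPartition_ne_bot (n : ℕ) (x : Fin n → ℕ) (h : ∀ i, x i < n)
    (hinj : ¬ Function.Injective x) :
    fiberPartition n x h ≠ pBot n := by
  intro hEq
  obtain ⟨a, b, hab, hne⟩ := Function.not_injective_iff.1 hinj
  set j : Fin n := ⟨x a, h a⟩ with hj
  have hsub : ({a, b} : Finset (Fin n)) ⊆ Finset.univ.filter fun i => x i = (j : ℕ) := by
    intro i hi
    rcases Finset.mem_insert.1 hi with rfl | hi
    · simp [hj]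
    · rw [Finset.mem_singleton.1 hi]
      simp [hj, ← hab]
  have h2 : 2 ≤ countOp n x j := by
    have := Finset.card_le_card hsub
    rwa [Finset.card_pair hne] at this
  have hmem : countOp n x j ∈ (fiberPartition n x h).parts := by
    rw [fiberPartition_parts]
    exact Multiset.mem_filter.2 ⟨Multiset.mem_map_of_mem _ (Finset.mem_univ j), by omega⟩
  rw [hEq] at hmem
  have := Multiset.eq_of_mem_replicate hmem
  omega

/-- realize a list of block sizes as a function -/
def realize (n : ℕ) (L : List ℕ) : Fin n → ℕ :=
  fun i => Nat.findGreatest (fun b => (L.take b).sum ≤ (i : ℕ)) n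

section realizeSec

variable {n : ℕ} {L : List ℕ}

lemma realize_spec (hs : L.sum = n) (hp : ∀ a ∈ L, 0 < a) (i : Fin n) :
    (L.take (realize n L i)).sum ≤ (i : ℕ) ∧
      (i : ℕ) < (L.take (realize n L i + 1)).sum ∧ realize n L i < L.length := by
  classical
  have hlen : L.length ≤ n := hs ▸ List.length_le_sum_of_one_le L hp
  have h0 : ((L.take 0).sum ≤ (i : ℕ)) := by simp
  have hspec : (L.take (realize n L i)).sum ≤ (i : ℕ) :=
    Nat.findGreatest_spec (P := fun b => (L.take b).sum ≤ (i : ℕ)) (Nat.zero_le n) h0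
  have hlt : realize n L i < L.length := by
    by_contra hge
    push_neg at hge
    rw [List.take_of_length_le hge, hs] at hspec
    exact absurd hspec (by have := i.2; omega)
  refine ⟨hspec, ?_, hlt⟩
  have hle : realize n L i + 1 ≤ n := by omega
  have hgr := Nat.findGreatest_is_greatest (P := fun b => (L.take b).sum ≤ (i : ℕ))
    (lt_add_one _) hle
  exact Nat.lt_of_not_le hgr

lemma realize_eq_iff (hs : L.sum = n) (hp : ∀ a ∈ L, 0 < a) (i : Fin n) (b : ℕ) :
    realize n L i = b ↔ (L.take b).sum ≤ (i : ℕ) ∧ (i : ℕ) < (L.take (b + 1)).sum := by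
  classical
  have hlen : L.length ≤ n := hs ▸ List.length_le_sum_of_one_le L hp
  obtain ⟨h1, h2, h3⟩ := realize_spec hs hp i
  constructor
  · rintro rfl; exact ⟨h1, h2⟩
  · rintro ⟨hb1, hb2⟩
    have hbl : b < L.length := by
      by_contra hge
      push_neg at hge
      rw [List.take_of_length_le hge, hs] at hb1
      exact absurd hb1 (by have := i.2; omega)
    have hble : b ≤ realize n L i :=
      Nat.le_findGreatest (by omega) hb1
    have : realize n L i ≤ b := by
      by_contra hgt
      push_neg at hgt
      have : (L.take (b + 1)).sum ≤ (L.take (realize n L i)).sum :=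
        List.monotone_sum_take L hgt
      omega
    omega

lemma realize_fiber (hs : L.sum = n) (hp : ∀ a ∈ L, 0 < a) (b : ℕ) :
    (Finset.univ.filter fun i : Fin n => realize n L i = b).card = L.getD b 0 := by
  classical
  have hlen : L.length ≤ n := hs ▸ List.length_le_sum_of_one_le L hp
  by_cases hb : b < L.length
  · have hsucc : (L.take (b + 1)).sum = (L.take b).sum + L.get ⟨b, hb⟩ := by
      simpa using List.sum_take_succ L b hb
    have hub : (L.take (b + 1)).sum ≤ n := by
      rw [← hs]
      conv_rhs => rw [← (List.take_length (l := L))]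
      exact List.monotone_sum_take L (by omega)
    have hset : (Finset.univ.filter fun i : Fin n => realize n L i = b)
        = (Finset.Ico ((L.take b).sum) ((L.take (b+1)).sum)).attachFin
          (fun m hm => by
            have := Finset.mem_Ico.1 hm
            omega) := by
      apply Finset.ext
      intro i
      simp only [Finset.mem_filter, Finset.mem_univ, true_and, Finset.mem_attachFin,
        Finset.mem_Ico]
      rw [realize_eq_iff hs hp]
    rw [hset, Finset.card_attachFin, Nat.card_Ico, List.getD_eq_get _ _ ⟨b, hb⟩]
    omega
  · push_neg at hb
    rw [List.getD_eq_default _ _ hb]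
    rw [Finset.card_eq_zero, Finset.filter_eq_empty_iff]
    intro i _
    have := (realize_spec hs hp i).2.2
    omega

lemma realize_lt (hs : L.sum = n) (hp : ∀ a ∈ L, 0 < a) (i : Fin n) :
    realize n L i < n := by
  have hlen : L.length ≤ n := hs ▸ List.length_le_sum_of_one_le L hp
  have := (realize_spec hs hp i).2.2
  omega

end realizeSec

lemma fiberPartition_realize (n : ℕ) (p : Nat.Partition n)
    (hs : p.parts.toList.sum = n) (hp : ∀ a ∈ p.parts.toList, 0 < a)
    (h : ∀ i, realize n p.parts.toList i < n) :
    fiberPartition n (realize n p.parts.toList) h = p := by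
  classical
  set L := p.parts.toList with hL
  apply Nat.Partition.ext
  rw [fiberPartition_parts]
  apply Multiset.ext.2
  intro m
  rw [Multiset.count_filter]
  by_cases hm : 0 < m
  · rw [if_pos hm, Multiset.count_map]
    have hcount : Multiset.count m p.parts = List.count m L := by
      rw [← Multiset.coe_toList p.parts, ← hL, Multiset.coe_count]
    rw [hcount]
    -- count in list = number of positions
    have hcl : List.count m L
        = (Finset.univ.filter fun b : Fin L.length => m = L.get b).card := by
      conv_lhs => rw [← List.map_get_finRange L]
      rw [← Multiset.coe_count, ← Multiset.map_coe, Multiset.count_map]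
      rfl
    rw [hcl]
    -- LHS: positions j : Fin n with m = countOp ... j = L.getD j 0
    have hlen : L.length ≤ n := hs ▸ List.length_le_sum_of_one_le L hp
    have hco : ∀ j : Fin n, countOp n (realize n L) j = L.getD (j : ℕ) 0 := by
      intro j
      exact realize_fiber hs hp (j : ℕ)
    rw [show Multiset.card
          (Multiset.filter (fun a => m = countOp n (realize n L) a) Finset.univ.val)
        = (Finset.univ.filter fun j : Fin n => m = L.getD (j : ℕ) 0).card from by
      congr 1
      apply Multiset.filter_congr
      intro j _
      rw [hco j]]
    refine Finset.card_bij'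
      (fun (j : Fin n) hj => (⟨(j : ℕ), by
        simp only [Finset.mem_filter, Finset.mem_univ, true_and] at hj
        by_contra hge
        push_neg at hge
        rw [List.getD_eq_default _ _ hge] at hj
        omega⟩ : Fin L.length))
      (fun (b : Fin L.length) _ => (⟨(b : ℕ), lt_of_lt_of_le b.2 hlen⟩ : Fin n))
      ?_ ?_ ?_ ?_
    · intro j hj
      simp only [Finset.mem_filter, Finset.mem_univ, true_and] at hj ⊢
      rw [← List.getD_eq_get]
      exact hj
    · intro b hb
      simp only [Finset.mem_filter, Finset.mem_univ, true_and] at hb ⊢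
      rw [List.getD_eq_get _ _ b]
      exact hb
    · intro j _; rfl
    · intro b _; rfl
  · rw [if_neg hm]
    have : m = 0 := by omega
    subst this
    symm
    rw [Multiset.count_eq_zero]
    intro hmem
    exact absurd (p.parts_pos hmem) (by omega)

lemma Fmap_injOn (n : ℕ) :
    Set.InjOn (Fmap n) {p | p ≠ Nat.Partition.indiscrete n} := by
  intro p hp q hq hpq
  have hlt : ∀ (r : Nat.Partition n), r ≠ Nat.Partition.indiscrete n →
      ∀ a ∈ r.parts, a < n := by
    intro r hr a ha
    by_contra hge
    push_neg at hge
    have hle : a ≤ n := le_trans (Multiset.le_sum_of_mem ha) (le_of_eq r.parts_sum)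
    have han : a = n := le_antisymm hle hge
    -- then parts = {n}
    have : r.parts = {n} := by
      have hsub : ({a} : Multiset ℕ) ≤ r.parts := Multiset.singleton_le.2 ha
      obtain ⟨t, ht⟩ := Multiset.le_iff_exists_add.1 hsub
      have hts : t.sum = 0 := by
        have := r.parts_sum
        rw [ht, Multiset.sum_add, Multiset.sum_singleton, han] at this
        omega
      have ht0 : t = 0 := by
        rw [Multiset.sum_eq_zero_iff] at hts
        by_contra htne
        obtain ⟨b, hb⟩ := Multiset.exists_mem_of_ne_zero htne
        have : 0 < b := r.parts_pos (by rw [ht]; exact Multiset.mem_add.2 (Or.inr hb))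
        have := hts b hb
        omega
      rw [ht, ht0, add_zero, han]
    apply hr
    apply Nat.Partition.ext
    rw [this]
    have hn0 : n ≠ 0 := by
      intro h0
      have := r.parts_pos ha
      omega
    rw [Nat.Partition.indiscrete_parts hn0]
  apply Nat.Partition.ext
  apply Multiset.ext.2
  intro m
  rcases Nat.eq_zero_or_pos m with rfl | hm
  · rw [Multiset.count_eq_zero.2 (fun hc => absurd (p.parts_pos hc) (by omega)),
      Multiset.count_eq_zero.2 (fun hc => absurd (q.parts_pos hc) (by omega))]
  rcases lt_or_ge m n with hmn | hmn
  · have := congrFun hpq ⟨m, hmn⟩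
    unfold Fmap at this
    simp only [Fin.val_mk] at this
    rw [if_neg hm.ne', if_neg hm.ne'] at this
    exact this
  · rw [Multiset.count_eq_zero.2 (fun hc => absurd (hlt p hp m hc) (not_lt.2 hmn)),
      Multiset.count_eq_zero.2 (fun hc => absurd (hlt q hq m hc) (not_lt.2 hmn))]

theorem card_image_NSet_second_iterate (n : ℕ) (hn : 4 ≤ n) :
    ((countOp n)^[2] '' NSet n).ncard = Fintype.card (Nat.Partition n) - 2 := by
  classical
  have hn0 : 0 < n := by omega
  -- the good set of partitions
  set S : Finset (Nat.Partition n) :=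
    Finset.univ \ {Nat.Partition.indiscrete n, pBot n} with hS
  have himg : (countOp n)^[2] '' NSet n = Fmap n '' (S : Set (Nat.Partition n)) := by
    apply Set.eq_of_subset_of_subset
    · rintro z ⟨x, ⟨hx1, hx2, hx3⟩, rfl⟩
      refine ⟨fiberPartition n x hx1, ?_, (second_iterate_eq n x hx1).symm⟩
      simp only [hS, Finset.coe_sdiff, Finset.coe_univ, Set.mem_diff, Set.mem_univ, true_and,
        Finset.coe_insert, Finset.coe_singleton, Set.mem_insert_iff, Set.mem_singleton_iff]
      push_neg
      exact ⟨fiberPartition_ne_top n x hx1 hx2 hn0, fiberPartition_ne_bot n x hx1 hx3⟩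
    · rintro z ⟨p, hp, rfl⟩
      simp only [hS, Finset.coe_sdiff, Finset.coe_univ, Set.mem_diff, Set.mem_univ, true_and,
        Finset.coe_insert, Finset.coe_singleton, Set.mem_insert_iff, Set.mem_singleton_iff] at hp
      push_neg at hp
      obtain ⟨hptop, hpbot⟩ := hp
      set L := p.parts.toList with hL
      have hs : L.sum = n := by
        rw [hL, ← Multiset.sum_coe, Multiset.coe_toList, p.parts_sum]
      have hpos : ∀ a ∈ L, 0 < a := fun a ha => p.parts_pos (Multiset.mem_toList.1 ha)
      have hlt : ∀ i, realize n L i < n := realize_lt hs hpos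
      refine ⟨realize n L, ⟨hlt, ?_, ?_⟩, ?_⟩
      · -- not constant: length ≥ 2
        have hlen2 : 2 ≤ L.length := by
          by_contra hlen1
          push_neg at hlen1
          interval_cases hl : L.length
          · have : L = [] := List.length_eq_zero_iff.1 hl
            rw [this] at hs; simp at hs; omega
          · obtain ⟨a, ha⟩ := List.length_eq_one_iff.1 hl
            apply hptop
            apply Nat.Partition.ext
            have : p.parts = {a} := by
              rw [← Multiset.coe_toList p.parts, ← hL, ha]; rfl
            have han : a = n := by rw [ha] at hs; simpa using hs
            rw [this, han, Nat.Partition.indiscrete_parts hn0.ne']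
        rintro ⟨c, hc⟩
        -- fibers over 0 and 1 both nonempty
        have f0 : (Finset.univ.filter fun i : Fin n => realize n L i = 0).card = L.getD 0 0 :=
          realize_fiber hs hpos 0
        have f1 : (Finset.univ.filter fun i : Fin n => realize n L i = 1).card = L.getD 1 0 :=
          realize_fiber hs hpos 1
        have hg0 : 0 < L.getD 0 0 := by
          rw [List.getD_eq_getElem _ _ (by omega)]
          exact hpos _ (List.getElem_mem _)
        have hg1 : 0 < L.getD 1 0 := by
          rw [List.getD_eq_getElem _ _ (by omega)]
          exact hpos _ (List.getElem_mem _)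
        rw [← f0] at hg0
        rw [← f1] at hg1
        obtain ⟨i0, hi0⟩ := Finset.card_pos.1 hg0
        obtain ⟨i1, hi1⟩ := Finset.card_pos.1 hg1
        simp only [Finset.mem_filter] at hi0 hi1
        rw [hc i0] at hi0
        rw [hc i1] at hi1
        omega
      · -- not injective: some part ≥ 2
        have h2 : ∃ b, b < L.length ∧ 2 ≤ L.getD b 0 := by
          by_contra hall
          push_neg at hall
          apply hpbot
          apply Nat.Partition.ext
          have hone : ∀ a ∈ p.parts, a = 1 := by
            intro a ha
            have h1 := p.parts_pos ha
            have ham : a ∈ L := Multiset.mem_toList.2 ha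
            obtain ⟨b, hb⟩ := List.mem_iff_get.1 ham
            rw [List.get_eq_getElem] at hb
            have hbl : (b : ℕ) < L.length := b.2
            have h3 := hall (b : ℕ) hbl
            rw [List.getD_eq_getElem _ _ hbl] at h3
            omega
          have hrep : p.parts = Multiset.replicate (Multiset.card p.parts) 1 :=
            Multiset.eq_replicate_card.2 hone
          have hcard : Multiset.card p.parts = n := by
            have hsum := p.parts_sum
            rw [hrep] at hsum
            simpa [Multiset.sum_replicate] using hsum
          rw [hrep, hcard]; rfl
        obtain ⟨b, hbl, hb⟩ := h2
        have hf : 2 ≤ (Finset.univ.filter fun i : Fin n => realize n L i = b).card := by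
          rw [realize_fiber hs hpos]
          exact hb
        obtain ⟨i0, hi0, i1, hi1, hne⟩ := Finset.one_lt_card.1
          (lt_of_lt_of_le one_lt_two hf)
        simp only [Finset.mem_filter] at hi0 hi1
        intro hinj
        exact hne (hinj (hi0.2.trans hi1.2.symm))
      · rw [second_iterate_eq n (realize n L) hlt]
        exact congrArg (Fmap n) (fiberPartition_realize n p hs hpos hlt)
  rw [himg]
  rw [Set.ncard_image_of_injOn (Fmap_injOn n |>.mono (by
    intro p hp
    simp only [hS, Finset.coe_sdiff, Finset.coe_univ, Set.mem_diff, Set.mem_univ, true_and,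
      Finset.coe_insert, Finset.coe_singleton, Set.mem_insert_iff, Set.mem_singleton_iff] at hp
    push_neg at hp
    exact hp.1))]
  rw [Set.ncard_coe_finset]
  have hne : Nat.Partition.indiscrete n ≠ pBot n := by
    intro hEq
    have h1 : (Nat.Partition.indiscrete n).parts = {n} := Nat.Partition.indiscrete_parts hn0.ne'
    have h2 : (pBot n).parts = Multiset.replicate n 1 := rfl
    rw [hEq, h2] at h1
    have : (n : ℕ) ∈ Multiset.replicate n 1 := by rw [h1]; simp
    have := Multiset.eq_of_mem_replicate this
    omega
  rw [hS, Finset.card_sdiff_of_subset (Finset.subset_univ _), Finset.card_univ]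
  rw [Finset.card_insert_of_notMem (by simpa using hne), Finset.card_singleton]
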